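/- For every odd integer n ≥ 3, the image in Tₙ of the element [1] + [2] + ⋯ + [(n−1)/2] of ℤ[ℤ] is a nonzero element of order 2 (it is nonzero, and twice it equals zero). -/
import Mathlib


noncomputable section

/-- The basis element `[k]` of the free abelian group `ℤ[ℤ]`. -/
def e (k : ℤ) : ℤ →₀ ℤ := Finsupp.single k 1

/-- The additive subgroup of `ℤ[ℤ]` generated by all `[k] − [k+n]`,
all `[k] − [−k]`, the element `[0]`, and all sums `[m] + [m+1] + ⋯ + [m+n−1]`. -/
def tRel (n : ℕ) : AddSubgroup (ℤ →₀ ℤ) :=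
  AddSubgroup.closure
    ({v | ∃ k : ℤ, v = e k - e (k + n)} ∪ {v | ∃ k : ℤ, v = e k - e (-k)} ∪ {e 0}
      ∪ {v | ∃ m : ℤ, v = ∑ i ∈ Finset.range n, e (m + i)})

/-- The group `Tₙ`. -/
abbrev T (n : ℕ) := (ℤ →₀ ℤ) ⧸ tRel n

/-- weight: 1 on residues ±1 mod n, else 0 -/
def cc (n : ℕ) (k : ℤ) : ZMod 2 := if (k : ZMod n) = 1 ∨ (k : ZMod n) = -1 then 1 else 0

/-- the invariant homomorphism -/
def psi (n : ℕ) : (ℤ →₀ ℤ) →+ ZMod 2 :=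
  Finsupp.liftAddHom fun k => zmultiplesHom (ZMod 2) (cc n k)

lemma psi_e (n : ℕ) (k : ℤ) : psi n (e k) = cc n k := by
  unfold psi e
  rw [Finsupp.liftAddHom_apply_single]
  exact one_zsmul _

lemma one_ne_neg_one (n : ℕ) (hn : 3 ≤ n) : (1 : ZMod n) ≠ -1 := by
  haveI : NeZero n := ⟨by omega⟩
  intro h
  have h2 : ((2 : ℕ) : ZMod n) = 0 := by push_cast; linear_combination h
  rw [ZMod.natCast_eq_zero_iff] at h2
  have := Nat.le_of_dvd (by norm_num) h2
  omega

lemma sum_cc (n : ℕ) (hn : 3 ≤ n) (m : ℤ) :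
    ∑ i ∈ Finset.range n, cc n (m + i) = 0 := by
  haveI : NeZero n := ⟨by omega⟩
  have key : ∑ i ∈ Finset.range n, cc n (m + i)
      = ∑ x : ZMod n, (if x = 1 ∨ x = -1 then (1 : ZMod 2) else 0) := by
    refine Finset.sum_nbij' (fun i => ((m + i : ℤ) : ZMod n))
      (fun x => (x - (m : ZMod n)).val)
      (fun a _ => Finset.mem_univ _)
      (fun x _ => Finset.mem_range.mpr (ZMod.val_lt _))
      ?_ ?_ ?_
    · intro a ha
      rw [Finset.mem_range] at ha
      push_cast
      rw [add_sub_cancel_left]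
      exact ZMod.val_cast_of_lt ha
    · intro x _
      push_cast
      rw [ZMod.natCast_val, ZMod.cast_id]
      ring
    · intro a _
      unfold cc
      rfl
  rw [key]
  have hne := one_ne_neg_one n hn
  have hsplit : ∀ x : ZMod n, (if x = 1 ∨ x = -1 then (1 : ZMod 2) else 0)
      = (if x = 1 then 1 else 0) + (if x = -1 then 1 else 0) := by
    intro x
    by_cases h1 : x = 1
    · have h2 : x ≠ -1 := by rw [h1]; exact hne
      rw [if_pos (Or.inl h1), if_pos h1, if_neg h2, add_zero]
    · by_cases h2 : x = -1
      · rw [if_pos (Or.inr h2), if_neg h1, if_pos h2, zero_add]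
      · rw [if_neg (by tauto), if_neg h1, if_neg h2, add_zero]
  simp only [hsplit, Finset.sum_add_distrib, Finset.sum_ite_eq', Finset.mem_univ, if_true]
  decide

lemma cc_neg (n : ℕ) (k : ℤ) : cc n (-k) = cc n k := by
  unfold cc
  rw [show ((-k : ℤ) : ZMod n) = -((k : ℤ) : ZMod n) from by push_cast; ring]
  refine if_congr ?_ rfl rfl
  rw [neg_eq_iff_eq_neg, neg_eq_iff_eq_neg, neg_neg, or_comm]

lemma cc_add_n (n : ℕ) (k : ℤ) : cc n (k + n) = cc n k := by
  unfold cc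
  rw [show ((k + n : ℤ) : ZMod n) = ((k : ℤ) : ZMod n) from by
    push_cast [ZMod.natCast_self]; ring]

lemma cc_zero (n : ℕ) (hn : 3 ≤ n) : cc n 0 = 0 := by
  haveI : Fact (1 < n) := ⟨by omega⟩
  unfold cc
  rw [if_neg]
  push_cast
  rintro (h | h)
  · exact one_ne_zero h.symm
  · exact one_ne_zero (neg_eq_zero.mp h.symm)

lemma tRel_le_ker (n : ℕ) (hn : 3 ≤ n) : tRel n ≤ (psi n).ker := by
  rw [tRel, AddSubgroup.closure_le]
  rintro v (((⟨k, rfl⟩ | ⟨k, rfl⟩) | rfl) | ⟨m, rfl⟩) <;>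
    simp only [SetLike.mem_coe, AddMonoidHom.mem_ker, map_sub, map_sum, psi_e]
  · rw [cc_add_n, sub_self]
  · rw [cc_neg, sub_self]
  · exact cc_zero n hn
  · exact sum_cc n hn m

lemma sum_split {M : Type*} [AddCommMonoid M] (f : ℕ → M) (m : ℕ) :
    ∑ j ∈ Finset.range (2 * m + 1), f j
      = f 0 + ∑ i ∈ Finset.range m, f (i + 1) + ∑ i ∈ Finset.range m, f (2 * m - i) := by
  rw [Finset.sum_range_succ']
  have h2 : ∑ i ∈ Finset.range (2 * m), f (i + 1)
      = ∑ i ∈ Finset.range m, f (i + 1) + ∑ i ∈ Finset.range m, f (m + i + 1) := by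
    rw [two_mul, Finset.sum_range_add]
  have h3 : ∑ i ∈ Finset.range m, f (m + i + 1) = ∑ i ∈ Finset.range m, f (2 * m - i) := by
    rw [← Finset.sum_range_reflect (fun i => f (2 * m - i)) m]
    refine Finset.sum_congr rfl fun j hj => ?_
    rw [Finset.mem_range] at hj
    congr 1
    omega
  rw [h2, h3]
  abel

theorem stmt9 (n : ℕ) (hodd : Odd n) (hn : 3 ≤ n) :
    (QuotientAddGroup.mk (∑ i ∈ Finset.range ((n - 1) / 2), e ((i : ℤ) + 1)) : T n) ≠ 0 ∧
      (QuotientAddGroup.mk (∑ i ∈ Finset.range ((n - 1) / 2), e ((i : ℤ) + 1)) : T n) +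
        (QuotientAddGroup.mk (∑ i ∈ Finset.range ((n - 1) / 2), e ((i : ℤ) + 1)) : T n) = 0 := by
  obtain ⟨m, hm⟩ := hodd
  have hm' : (n - 1) / 2 = m := by omega
  have hm1 : 1 ≤ m := by omega
  rw [hm']
  set s := ∑ i ∈ Finset.range m, e ((i : ℤ) + 1) with hs
  constructor
  · intro h
    rw [QuotientAddGroup.eq_zero_iff] at h
    have h0 : psi n s = 0 := tRel_le_ker n hn h
    have h1 : psi n s = 1 := by
      rw [hs, map_sum]
      simp only [psi_e]
      rw [Finset.sum_eq_single_of_mem 0 (Finset.mem_range.mpr (by omega))]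
      · norm_num [cc]
      · intro i hi hi0
        rw [Finset.mem_range] at hi
        unfold cc
        rw [if_neg]
        rintro (h | h)
        · have h1' : ((i + 1 : ℕ) : ZMod n) = ((1 : ℕ) : ZMod n) := by
            push_cast
            push_cast at h
            exact h
          have hv := congrArg ZMod.val h1'
          rw [ZMod.val_cast_of_lt (show i + 1 < n by omega),
            ZMod.val_cast_of_lt (show 1 < n by omega)] at hv
          omega
        · have hn1 : ((n - 1 : ℕ) : ZMod n) = -1 := by
            push_cast [Nat.cast_sub (show 1 ≤ n by omega), ZMod.natCast_self]
            ring
          have h2' : ((i + 1 : ℕ) : ZMod n) = ((n - 1 : ℕ) : ZMod n) := by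
            rw [hn1]
            push_cast at h ⊢
            exact h
          have hv := congrArg ZMod.val h2'
          rw [ZMod.val_cast_of_lt (show i + 1 < n by omega),
            ZMod.val_cast_of_lt (show n - 1 < n by omega)] at hv
          omega
    rw [h0] at h1
    exact absurd h1.symm one_ne_zero
  · have mem1 : (∑ i ∈ Finset.range n, e (0 + (i : ℤ))) ∈ tRel n :=
      AddSubgroup.subset_closure (Or.inr ⟨0, rfl⟩)
    have mem0 : e 0 ∈ tRel n :=
      AddSubgroup.subset_closure (Or.inl (Or.inr rfl))
    have memk : ∀ k : ℤ, e k - e ((n : ℤ) - k) ∈ tRel n := by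
      intro k
      have ha : e k - e (-k) ∈ tRel n :=
        AddSubgroup.subset_closure (Or.inl (Or.inl (Or.inr ⟨k, rfl⟩)))
      have hb : e (-k) - e (-k + n) ∈ tRel n :=
        AddSubgroup.subset_closure (Or.inl (Or.inl (Or.inl ⟨-k, rfl⟩)))
      have hab := add_mem ha hb
      rw [sub_add_sub_cancel, show (-k + (n : ℤ)) = (n : ℤ) - k from by ring] at hab
      exact hab
    have hsum : (∑ i ∈ Finset.range n, e (0 + (i : ℤ)))
        = e 0 + s + ∑ i ∈ Finset.range m, e ((n : ℤ) - ((i : ℤ) + 1)) := by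
      have h0 : (∑ i ∈ Finset.range n, e (0 + (i : ℤ)))
          = ∑ j ∈ Finset.range (2 * m + 1), e (j : ℤ) := by
        rw [show 2 * m + 1 = n from by omega]
        exact Finset.sum_congr rfl fun i _ => by rw [zero_add]
      have hA : ∑ i ∈ Finset.range m, e (((i + 1 : ℕ) : ℤ)) = s := by
        rw [hs]
        refine Finset.sum_congr rfl fun i _ => ?_
        rw [show ((i + 1 : ℕ) : ℤ) = (i : ℤ) + 1 from by push_cast; ring]
      have hB : ∑ i ∈ Finset.range m, e (((2 * m - i : ℕ) : ℤ))
          = ∑ i ∈ Finset.range m, e ((n : ℤ) - ((i : ℤ) + 1)) := by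
        refine Finset.sum_congr rfl fun i hi => ?_
        rw [Finset.mem_range] at hi
        rw [show ((2 * m - i : ℕ) : ℤ) = (n : ℤ) - ((i : ℤ) + 1) from by
          push_cast [Nat.cast_sub (show i ≤ 2 * m by omega)]; omega]
      rw [h0, sum_split (fun j => e (j : ℤ)) m, hA, hB]
      norm_num
    have key : s + s = (∑ i ∈ Finset.range n, e (0 + (i : ℤ))) - e 0
        + ∑ i ∈ Finset.range m, (e ((i : ℤ) + 1) - e ((n : ℤ) - ((i : ℤ) + 1))) := by
      rw [hsum, Finset.sum_sub_distrib]
      abel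
    rw [← QuotientAddGroup.mk_add, QuotientAddGroup.eq_zero_iff, key]
    exact add_mem (sub_mem mem1 mem0)
      (AddSubgroup.sum_mem _ fun i _ => memk ((i : ℤ) + 1))
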